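/- For Δ ≥ 3, letting π_j = C(Δ,j)(Δ-2)^{-j} ((Δ-2) + (6-5Δ)j + 2(Δ-1)j²), one has ∑_{j=0}^{Δ} π_j = −((Δ-1)/(Δ-2))^{Δ-1}. -/

import Mathlib

open Finset

private lemma sumL0 (n : ℕ) (x : ℝ) :
    ∑ j ∈ Finset.range (n + 1), (n.choose j : ℝ) * x ^ j = (1 + x) ^ n := by
  rw [add_comm 1 x, add_pow]
  exact Finset.sum_congr rfl (fun j _ => by rw [one_pow]; ring)

private lemma sumL1 (n : ℕ) (x : ℝ) :
    ∑ j ∈ Finset.range (n + 2), ((n + 1).choose j : ℝ) * x ^ j * (j : ℝ) =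
      (n + 1 : ℝ) * x * (1 + x) ^ n := by
  rw [Finset.sum_range_succ']
  push_cast
  simp only [mul_zero, add_zero, pow_zero]
  have h : ∀ k ∈ Finset.range (n + 1),
      ((n + 1).choose (k + 1) : ℝ) * x ^ (k + 1) * ((k : ℝ) + 1) =
        ((n : ℝ) + 1) * x * ((n.choose k : ℝ) * x ^ k) := by
    intro k _
    have h := Nat.add_one_mul_choose_eq n k
    have h' := congrArg (Nat.cast : ℕ → ℝ) h
    push_cast at h'
    rw [pow_succ]
    linear_combination -(x ^ k * x) * h'
  rw [Finset.sum_congr rfl h, ← Finset.mul_sum, sumL0]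

private lemma sumL2 (n : ℕ) (x : ℝ) :
    ∑ j ∈ Finset.range (n + 3), ((n + 2).choose j : ℝ) * x ^ j * ((j : ℝ) * ((j : ℝ) - 1)) =
      (n + 2 : ℝ) * (n + 1 : ℝ) * x ^ 2 * (1 + x) ^ n := by
  rw [Finset.sum_range_succ', Finset.sum_range_succ']
  push_cast
  norm_num
  have h : ∀ k ∈ Finset.range (n + 1),
      ((n + 2).choose (k + 1 + 1) : ℝ) * x ^ (k + 1 + 1) *
          (((k : ℝ) + 1 + 1) * ((k : ℝ) + 1)) =
        ((n : ℝ) + 2) * ((n : ℝ) + 1) * x ^ 2 * ((n.choose k : ℝ) * x ^ k) := by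
    intro k _
    have h1 := Nat.add_one_mul_choose_eq (n + 1) (k + 1)
    have h2 := Nat.add_one_mul_choose_eq n k
    have h1' := congrArg (Nat.cast : ℕ → ℝ) h1
    have h2' := congrArg (Nat.cast : ℕ → ℝ) h2
    push_cast at h1' h2'
    rw [pow_succ, pow_succ]
    linear_combination -(x ^ k * x * x) * ((((k : ℝ) + 1)) * h1' + (((n : ℝ) + 2)) * h2')
  rw [Finset.sum_congr rfl h, ← Finset.mul_sum, sumL0]

theorem stmt_14 (Δ : ℕ) (hΔ : 3 ≤ Δ) :
    ∑ j ∈ Finset.range (Δ + 1),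
        (Δ.choose j : ℝ) * (1 / ((Δ : ℝ) - 2)) ^ j *
          (((Δ : ℝ) - 2) + (6 - 5 * (Δ : ℝ)) * (j : ℝ) + 2 * ((Δ : ℝ) - 1) * (j : ℝ) ^ 2) =
      -((((Δ : ℝ) - 1) / ((Δ : ℝ) - 2)) ^ (Δ - 1)) := by
  obtain ⟨m, rfl⟩ : ∃ m, Δ = m + 3 := ⟨Δ - 3, by omega⟩
  set x : ℝ := 1 / (((m + 3 : ℕ) : ℝ) - 2) with hx
  have hd : (((m + 3 : ℕ) : ℝ)) - 2 = (m : ℝ) + 1 := by push_cast; ring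
  have key : ∀ j ∈ Finset.range (m + 3 + 1),
      ((m + 3 : ℕ).choose j : ℝ) * x ^ j *
          ((((m + 3 : ℕ) : ℝ) - 2) + (6 - 5 * ((m + 3 : ℕ) : ℝ)) * (j : ℝ)
            + 2 * (((m + 3 : ℕ) : ℝ) - 1) * (j : ℝ) ^ 2) =
        (((m + 3 : ℕ) : ℝ) - 2) * (((m + 3 : ℕ).choose j : ℝ) * x ^ j)
          + (4 - 3 * ((m + 3 : ℕ) : ℝ)) * (((m + 3 : ℕ).choose j : ℝ) * x ^ j * (j : ℝ))
          + 2 * (((m + 3 : ℕ) : ℝ) - 1) *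
              (((m + 3 : ℕ).choose j : ℝ) * x ^ j * ((j : ℝ) * ((j : ℝ) - 1))) := by
    intro j _
    push_cast
    ring
  rw [Finset.sum_congr rfl key]
  rw [Finset.sum_add_distrib, Finset.sum_add_distrib, ← Finset.mul_sum, ← Finset.mul_sum,
    ← Finset.mul_sum]
  have e0 := sumL0 (m + 3) x
  have e1 := sumL1 (m + 2) x
  have e2 := sumL2 (m + 1) x
  rw [show m + 2 + 1 = m + 3 from rfl, show m + 2 + 2 = m + 3 + 1 from rfl] at e1
  rw [show m + 1 + 2 = m + 3 from rfl, show m + 1 + 3 = m + 3 + 1 from rfl] at e2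
  rw [e0, e1, e2]
  have hM0 : (m : ℝ) + 1 ≠ 0 := by positivity
  have hM2 : (m : ℝ) + 2 ≠ 0 := by positivity
  have hxa : x = 1 / ((m : ℝ) + 1) := by rw [hx, hd]
  have h1x : 1 + x = ((m : ℝ) + 2) / ((m : ℝ) + 1) := by
    rw [hxa, eq_div_iff hM0]; field_simp; ring
  have hfrac : ((((m + 3 : ℕ) : ℝ)) - 1) / (((m + 3 : ℕ) : ℝ) - 2)
      = ((m : ℝ) + 2) / ((m : ℝ) + 1) := by
    rw [hd]; push_cast; ring_nf
  rw [show m + 3 - 1 = m + 2 from by omega, hfrac, h1x, hxa]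
  rw [show m + 3 = (m + 1) + 2 from rfl, show m + 2 = (m + 1) + 1 from rfl,
    pow_add, pow_add, pow_add]
  push_cast
  simp only [pow_succ, pow_one]
  field_simp
  ring
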